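/- The following operator identities hold in End_K(Λ_n(p)) for all i, j, k ∈ {1,…,n}: [Δ_k, [Δ_i, Δ_j]] = 0; [Δ_k, [L_{θ_i}, Δ_j]] = 2·δ_{ki}·Δ_j; and [L_{θ_k}, [L_{θ_i}, Δ_j]] = −2·δ_{kj}·L_{θ_i}, where [A, B] = A∘B − B∘A. -/

import Mathlib

noncomputable section

open scoped BigOperators

/-- Commutator `[x, y] = x*y - y*x` in an associative ring. -/
def brk {A : Type*} [Ring A] (x y : A) : A := x * y - y * x

/-- Defining relations of the `ℤ₂^p`-graded commutative algebra `Λ_n(p)`: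
`θ_i^{(α)}·θ_j^{(β)} = (−1)^{δ_{αβ}}·θ_j^{(β)}·θ_i^{(α)}`. -/
inductive LamRel (n p : ℕ) : FreeAlgebra ℂ (Fin n × Fin p) → FreeAlgebra ℂ (Fin n × Fin p) → Prop
  | comm : ∀ (i j : Fin n) (α β : Fin p),
      LamRel n p (FreeAlgebra.ι ℂ (i, α) * FreeAlgebra.ι ℂ (j, β))
        ((if α = β then (-1 : ℂ) else 1) • (FreeAlgebra.ι ℂ (j, β) * FreeAlgebra.ι ℂ (i, α)))

/-- The algebra `Λ_n(p)`. -/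
abbrev Lam (n p : ℕ) : Type := RingQuot (LamRel n p)

/-- The generators `θ_i^{(α)}` of `Λ_n(p)`. -/
def θc (n p : ℕ) (i : Fin n) (α : Fin p) : Lam n p :=
  RingQuot.mkAlgHom ℂ (LamRel n p) (FreeAlgebra.ι ℂ (i, α))

/-- `θ_i = Σ_{α=1}^p θ_i^{(α)}`. -/
def θv (n p : ℕ) (i : Fin n) : Lam n p := ∑ α : Fin p, θc n p i α

/-- The inhomogeneous subalgebra `IΛ_n(p)` generated by `θ_1, …, θ_n`. -/
def ILam (n p : ℕ) : Subalgebra ℂ (Lam n p) :=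
  Algebra.adjoin ℂ (Set.range (θv n p))

/-- `Δ_i = Σ_{α=1}^p ∂_i^{(α)}`. -/
def Δop (n p : ℕ) (Dp : Fin n → Fin p → Module.End ℂ (Lam n p)) (i : Fin n) :
    Module.End ℂ (Lam n p) := ∑ α : Fin p, Dp i α

section brkLemmas
variable {A : Type*} [Ring A] [Algebra ℂ A]

theorem brk_sum_right {ι : Type*} (s : Finset ι) (x : A) (f : ι → A) :
    brk x (∑ m ∈ s, f m) = ∑ m ∈ s, brk x (f m) := by
  simp [brk, Finset.mul_sum, Finset.sum_mul, Finset.sum_sub_distrib]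

theorem brk_sum_left {ι : Type*} (s : Finset ι) (y : A) (f : ι → A) :
    brk (∑ m ∈ s, f m) y = ∑ m ∈ s, brk (f m) y := by
  simp [brk, Finset.mul_sum, Finset.sum_mul, Finset.sum_sub_distrib]

theorem brk_smul_right (c : ℂ) (x y : A) : brk x (c • y) = c • brk x y := by
  simp [brk, mul_smul_comm, smul_mul_assoc, smul_sub]

theorem brk_sub_right (x y z : A) : brk x (y - z) = brk x y - brk x z := by
  simp only [brk, mul_sub, sub_mul]; abel

theorem brk_one_right (x : A) : brk x 1 = 0 := by simp [brk]

theorem brk_zero_right (x : A) : brk x 0 = 0 := by simp [brk]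
end brkLemmas

set_option maxHeartbeats 1600000 in
/-- Operator identities in `End(Λ_n(p))`: `[Δ_k, [Δ_i, Δ_j]] = 0`,
`[Δ_k, [L_{θ_i}, Δ_j]] = 2δ_{ki}·Δ_j` and `[L_{θ_k}, [L_{θ_i}, Δ_j]] = −2δ_{kj}·L_{θ_i}`. -/
theorem stmt_8 (n p : ℕ) (hn : 0 < n) (hp : 0 < p)
    (Dp : Fin n → Fin p → Module.End ℂ (Lam n p))
    (hD1 : ∀ (i : Fin n) (α : Fin p), Dp i α (1 : Lam n p) = 0)
    (hD2 : ∀ (i j : Fin n) (α β : Fin p),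
      Dp i α * LinearMap.mulLeft ℂ (θc n p j β)
          - (if α = β then (-1 : ℂ) else 1) • (LinearMap.mulLeft ℂ (θc n p j β) * Dp i α)
        = if i = j ∧ α = β then 1 else 0)
    (hD3 : ∀ (i j : Fin n) (α β : Fin p),
      Dp i α * Dp j β = (if α = β then (-1 : ℂ) else 1) • (Dp j β * Dp i α))
    (i j k : Fin n) :
    brk (Δop n p Dp k) (brk (Δop n p Dp i) (Δop n p Dp j)) = 0 ∧
    brk (Δop n p Dp k) (brk (LinearMap.mulLeft ℂ (θv n p i)) (Δop n p Dp j))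
      = (if k = i then (2 : ℂ) else 0) • Δop n p Dp j ∧
    brk (LinearMap.mulLeft ℂ (θv n p k))
        (brk (LinearMap.mulLeft ℂ (θv n p i)) (Δop n p Dp j))
      = (if k = j then (-2 : ℂ) else 0) • LinearMap.mulLeft ℂ (θv n p i) := by
  classical
  set L : Fin n → Fin p → Module.End ℂ (Lam n p) :=
    fun m α => LinearMap.mulLeft ℂ (θc n p m α) with hLdef
  have hε2 : ∀ (α β : Fin p),
      (if α = β then (-1 : ℂ) else 1) * (if α = β then (-1 : ℂ) else 1) = 1 := by
    intro α β; split_ifs <;> norm_num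
  -- mulLeft of the sum
  have hLv : ∀ m : Fin n, LinearMap.mulLeft ℂ (θv n p m) = ∑ α : Fin p, L m α := by
    intro m
    ext x
    simp [θv, hLdef, Finset.sum_mul, LinearMap.sum_apply]
  -- commutation of the generators
  have hθ : ∀ (a b : Fin n) (γ α : Fin p),
      θc n p a γ * θc n p b α
        = (if γ = α then (-1 : ℂ) else 1) • (θc n p b α * θc n p a γ) := by
    intro a b γ α
    have h := RingQuot.mkAlgHom_rel ℂ (LamRel.comm a b γ α)
    rw [map_mul, map_smul, map_mul] at h
    exact h
  -- commutation of the left-multiplication operators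
  have hLL : ∀ (a b : Fin n) (γ α : Fin p),
      L a γ * L b α = (if γ = α then (-1 : ℂ) else 1) • (L b α * L a γ) := by
    intro a b γ α
    ext x
    simp only [hLdef, Module.End.mul_apply, LinearMap.mulLeft_apply, LinearMap.smul_apply,
      smul_mul_assoc]
    rw [← mul_assoc, hθ a b γ α, smul_mul_assoc, mul_assoc]
  -- rearranged form of hD2
  have hDL : ∀ (a b : Fin n) (γ α : Fin p),
      Dp a γ * L b α = (if γ = α then (-1 : ℂ) else 1) • (L b α * Dp a γ)
        + (if a = b ∧ γ = α then 1 else 0) := by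
    intro a b γ α
    have h := (sub_eq_iff_eq_add (G := Module.End ℂ (Lam n p))).mp (hD2 a b γ α)
    rw [add_comm] at h
    exact h
  refine ⟨?_, ?_, ?_⟩
  · -- [Δ_k, [Δ_i, Δ_j]] = 0
    have h1 : ∀ α β : Fin p, brk (Dp i α) (Dp j β)
        = if β = α then (-2 : ℂ) • (Dp j α * Dp i α) else 0 := by
      intro α β
      rcases eq_or_ne β α with h | h
      · subst h
        rw [if_pos rfl, brk, hD3 i j β β, if_pos rfl, neg_one_smul ℂ (M := Module.End ℂ (Lam n p)), neg_smul (M := Module.End ℂ (Lam n p)), two_smul ℂ (M := Module.End ℂ (Lam n p))]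
        abel
      · rw [if_neg h, brk, hD3 i j α β, if_neg fun hh => h hh.symm, one_smul, sub_self]
    have hbrk1 : brk (Δop n p Dp i) (Δop n p Dp j)
        = ∑ α : Fin p, (-2 : ℂ) • (Dp j α * Dp i α) := by
      unfold Δop
      rw [brk_sum_left]
      simp_rw [brk_sum_right, h1]
      simp
    rw [hbrk1]
    have hcomm : ∀ γ α : Fin p,
        Dp k γ * (Dp j α * Dp i α) = (Dp j α * Dp i α) * Dp k γ := by
      intro γ α
      rw [← mul_assoc, hD3 k j γ α, smul_mul_assoc, mul_assoc, hD3 k i γ α,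
        mul_smul_comm, smul_smul, hε2, one_smul, mul_assoc]
    unfold Δop
    rw [brk_sum_right]
    refine Finset.sum_eq_zero fun α _ => ?_
    rw [brk_smul_right, brk_sum_left]
    rw [Finset.sum_eq_zero, smul_zero]
    intro γ _
    simp [brk, hcomm γ α]
  · -- [Δ_k, [L_i, Δ_j]] = 2 δ_{ki} Δ_j
    have hbrk2 : brk (LinearMap.mulLeft ℂ (θv n p i)) (Δop n p Dp j)
        = ∑ α : Fin p, ((2 : ℂ) • (L i α * Dp j α)
            - (if j = i then (1 : Module.End ℂ (Lam n p)) else 0)) := by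
      rw [hLv]
      unfold Δop
      rw [brk_sum_left]
      refine Finset.sum_congr rfl fun α _ => ?_
      rw [brk_sum_right]
      have h2t : ∀ β : Fin p, brk (L i α) (Dp j β)
          = if β = α then ((2 : ℂ) • (L i α * Dp j α)
              - (if j = i then (1 : Module.End ℂ (Lam n p)) else 0)) else 0 := by
        intro β
        rcases eq_or_ne β α with h | h
        · subst h
          rw [if_pos rfl, brk, hDL j i β β, if_pos rfl, neg_one_smul ℂ (M := Module.End ℂ (Lam n p))]
          simp only [eq_self_iff_true, and_true]
          rw [two_smul ℂ (M := Module.End ℂ (Lam n p))]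
          abel
        · rw [if_neg h, brk, hDL j i β α, if_neg h,
            if_neg fun hh => h hh.2, one_smul, add_zero, sub_self]
      simp_rw [h2t]
      simp
    rw [hbrk2, brk_sum_right]
    have ht : ∀ α γ : Fin p, brk (Dp k γ) (L i α * Dp j α)
        = if k = i ∧ γ = α then Dp j α else 0 := by
      intro α γ
      have key : Dp k γ * (L i α * Dp j α)
          = (L i α * Dp j α) * Dp k γ
            + (if k = i ∧ γ = α then (1 : Module.End ℂ (Lam n p)) else 0) * Dp j α := by
        rw [← mul_assoc, hDL k i γ α, add_mul, smul_mul_assoc, mul_assoc, hD3 k j γ α,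
          mul_smul_comm, smul_smul, hε2, one_smul, mul_assoc]
      rw [brk, key]
      split_ifs <;> simp [add_sub_cancel_left (G := Module.End ℂ (Lam n p))]
    have hterm : ∀ α : Fin p,
        brk (Δop n p Dp k) ((2 : ℂ) • (L i α * Dp j α)
            - (if j = i then (1 : Module.End ℂ (Lam n p)) else 0))
        = (2 : ℂ) • (if k = i then Dp j α else 0) := by
      intro α
      rw [brk_sub_right, brk_smul_right]
      have hc : brk (Δop n p Dp k)
          (if j = i then (1 : Module.End ℂ (Lam n p)) else 0) = 0 := by
        split_ifs
        · exact brk_one_right _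
        · exact brk_zero_right _
      rw [hc, sub_zero (G := Module.End ℂ (Lam n p))]
      unfold Δop
      rw [brk_sum_left]
      congr 1
      rw [Finset.sum_congr rfl fun γ _ => ht α γ]
      by_cases hki : k = i
      · rw [if_pos hki]
        simp only [hki, eq_self_iff_true, true_and]
        rw [Finset.sum_ite_eq' Finset.univ α fun _ => Dp j α]
        simp
      · rw [if_neg hki]
        exact Finset.sum_eq_zero fun γ _ => if_neg fun hh => hki hh.1
    rw [Finset.sum_congr rfl fun α _ => hterm α]
    by_cases hki : k = i
    · rw [if_pos hki]
      unfold Δop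
      rw [Finset.smul_sum]
      exact Finset.sum_congr rfl fun α _ => by rw [if_pos hki]
    · rw [if_neg hki, zero_smul]
      exact Finset.sum_eq_zero fun α _ => by rw [if_neg hki, smul_zero]
  · -- [L_k, [L_i, Δ_j]] = -2 δ_{kj} L_i
    have hbrk2 : brk (LinearMap.mulLeft ℂ (θv n p i)) (Δop n p Dp j)
        = ∑ α : Fin p, ((2 : ℂ) • (L i α * Dp j α)
            - (if j = i then (1 : Module.End ℂ (Lam n p)) else 0)) := by
      rw [hLv]
      unfold Δop
      rw [brk_sum_left]
      refine Finset.sum_congr rfl fun α _ => ?_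
      rw [brk_sum_right]
      have h2t : ∀ β : Fin p, brk (L i α) (Dp j β)
          = if β = α then ((2 : ℂ) • (L i α * Dp j α)
              - (if j = i then (1 : Module.End ℂ (Lam n p)) else 0)) else 0 := by
        intro β
        rcases eq_or_ne β α with h | h
        · subst h
          rw [if_pos rfl, brk, hDL j i β β, if_pos rfl, neg_one_smul ℂ (M := Module.End ℂ (Lam n p))]
          simp only [eq_self_iff_true, and_true]
          rw [two_smul ℂ (M := Module.End ℂ (Lam n p))]
          abel
        · rw [if_neg h, brk, hDL j i β α, if_neg h,
            if_neg fun hh => h hh.2, one_smul, add_zero, sub_self]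
      simp_rw [h2t]
      simp
    rw [hbrk2, brk_sum_right]
    have ht : ∀ α γ : Fin p, brk (L k γ) (L i α * Dp j α)
        = -(if j = k ∧ α = γ then L i α else 0) := by
      intro α γ
      have hsym : (if α = γ then (-1 : ℂ) else 1) = (if γ = α then (-1 : ℂ) else 1) := by
        rcases eq_or_ne α γ with h | h
        · simp [h]
        · rw [if_neg h, if_neg fun hh => h hh.symm]
      have h1 : (L i α * Dp j α) * L k γ
          = (if γ = α then (-1 : ℂ) else 1) • (L i α * (L k γ * Dp j α))
            + L i α * (if j = k ∧ α = γ then (1 : Module.End ℂ (Lam n p)) else 0) := by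
        rw [mul_assoc, hDL j k α γ, mul_add, mul_smul_comm, hsym]
      have h2 : L k γ * (L i α * Dp j α)
          = (if γ = α then (-1 : ℂ) else 1) • (L i α * (L k γ * Dp j α)) := by
        rw [← mul_assoc, hLL k i γ α, smul_mul_assoc, mul_assoc]
      rw [brk, h1, h2]
      split_ifs <;> simp [neg_zero (G := Module.End ℂ (Lam n p)), sub_add_cancel_left (G := Module.End ℂ (Lam n p))]
    have hterm : ∀ α : Fin p,
        brk (LinearMap.mulLeft ℂ (θv n p k)) ((2 : ℂ) • (L i α * Dp j α)
            - (if j = i then (1 : Module.End ℂ (Lam n p)) else 0))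
        = (-2 : ℂ) • (if k = j then L i α else 0) := by
      intro α
      rw [brk_sub_right, brk_smul_right]
      have hc : brk (LinearMap.mulLeft ℂ (θv n p k))
          (if j = i then (1 : Module.End ℂ (Lam n p)) else 0) = 0 := by
        split_ifs
        · exact brk_one_right _
        · exact brk_zero_right _
      rw [hc, sub_zero (G := Module.End ℂ (Lam n p)), hLv k, brk_sum_left]
      rw [Finset.sum_congr rfl fun γ _ => ht α γ]
      by_cases hkj : k = j
      · subst hkj
        simp only [eq_self_iff_true, true_and, if_true]
        rw [Finset.sum_neg_distrib (G := Module.End ℂ (Lam n p)), Finset.sum_ite_eq]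
        simp only [Finset.mem_univ, if_true, smul_neg]
        module
      · simp [hkj, Ne.symm hkj, neg_zero (G := Module.End ℂ (Lam n p))]
    rw [Finset.sum_congr rfl fun α _ => hterm α]
    by_cases hkj : k = j
    · rw [if_pos hkj, hLv i, Finset.smul_sum]
      exact Finset.sum_congr rfl fun α _ => by rw [if_pos hkj]
    · rw [if_neg hkj, zero_smul]
      exact Finset.sum_eq_zero fun α _ => by rw [if_neg hkj, smul_zero]
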